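/- Let p = log_4 3. For all nonnegative reals a, b, c, d, we have (ad)^p + (bc)^p + max((ac)^p, (bd)^p) ≥ ((a+b)(c+d))^p. -/

import Mathlib

-- Claim (A): for 1 ≤ q ≤ 2, 0 ≤ s ≤ 1:  s^q - 1 + (1+s)^(q-1)*(1-s) ≤ 0
private lemma claimA {q s : ℝ} (hq1 : 1 ≤ q) (hq2 : q ≤ 2) (hs : 0 ≤ s) (hs1 : s ≤ 1) :
    s ^ q - 1 + (1 + s) ^ (q - 1) * (1 - s) ≤ 0 := by
  rcases eq_or_lt_of_le hs with h0 | h0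
  · rw [← h0]
    rw [Real.zero_rpow (by linarith : q ≠ 0)]
    simp [Real.one_rpow]
  · -- weighted AM-GM:  x^(q-1) * 1^(2-q) ≤ (q-1)*x + (2-q)
    have w1 : (1 + s) ^ (q - 1) ≤ 1 + (q - 1) * s := by
      have := Real.geom_mean_le_arith_mean2_weighted (by linarith : (0:ℝ) ≤ q - 1)
        (by linarith : (0:ℝ) ≤ 2 - q) (by linarith : (0:ℝ) ≤ 1 + s) zero_le_one
        (by ring)
      rw [Real.one_rpow, mul_one] at this
      linarith
    have w2 : s ^ (q - 1) ≤ (q - 1) * s + (2 - q) := by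
      have := Real.geom_mean_le_arith_mean2_weighted (by linarith : (0:ℝ) ≤ q - 1)
        (by linarith : (0:ℝ) ≤ 2 - q) hs zero_le_one (by ring)
      rw [Real.one_rpow, mul_one, mul_one] at this
      linarith
    have e : s ^ q = s * s ^ (q - 1) := by
      rw [show q = 1 + (q - 1) by ring, Real.rpow_add h0, Real.rpow_one]
      ring_nf
    have hsq : s ^ q ≤ s * ((q - 1) * s + (2 - q)) := by
      rw [e]
      exact mul_le_mul_of_nonneg_left w2 hs
    have h3 : (1 + s) ^ (q - 1) * (1 - s) ≤ (1 + (q - 1) * s) * (1 - s) :=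
      mul_le_mul_of_nonneg_right w1 (by linarith)
    nlinarith [hsq, h3]


private lemma phi_nonneg {q : ℝ} (hq1 : 1 < q) (hq2 : q < 2) (h2q : (2:ℝ) ^ q = 3)
    {t : ℝ} (ht : 0 < t) (ht1 : t ≤ 1) :
    0 ≤ t ^ (q/2) + t ^ (-(q/2)) + 1 - (1 + t) ^ q * t ^ (-(q/2)) := by
  set φ : ℝ → ℝ := fun u => u ^ (q/2) + u ^ (-(q/2)) + 1 - (1 + u) ^ q * u ^ (-(q/2)) with hφ
  have hφ1 : φ 1 = 0 := by
    simp only [hφ, Real.one_rpow, mul_one]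
    norm_num [h2q]
  -- derivative of φ at any s > 0
  have hD : ∀ s : ℝ, 0 < s → HasDerivAt φ
      (q/2 * s ^ (q/2 - 1) + (-(q/2)) * s ^ (-(q/2) - 1)
        - (1 * q * (1 + s) ^ (q - 1) * s ^ (-(q/2))
           + (1 + s) ^ q * ((-(q/2)) * s ^ (-(q/2) - 1)))) s := by
    intro s hs
    have hs0 : s ≠ 0 := ne_of_gt hs
    have h1s : (0:ℝ) < 1 + s := by linarith
    have d1 : HasDerivAt (fun u : ℝ => u ^ (q/2)) (q/2 * s ^ (q/2 - 1)) s :=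
      Real.hasDerivAt_rpow_const (Or.inl hs0)
    have d2 : HasDerivAt (fun u : ℝ => u ^ (-(q/2))) ((-(q/2)) * s ^ (-(q/2) - 1)) s :=
      Real.hasDerivAt_rpow_const (Or.inl hs0)
    have d3 : HasDerivAt (fun u : ℝ => (1 + u) ^ q) (1 * q * (1 + s) ^ (q - 1)) s :=
      (HasDerivAt.const_add 1 (hasDerivAt_id s)).rpow_const (Or.inl h1s.ne')
    have d4 := d3.mul d2
    have d5 := (d1.add d2).add_const 1
    exact (d5.sub d4)
  -- the derivative is nonpositive on (0, 1)
  have hEneg : ∀ s : ℝ, 0 < s → s ≤ 1 →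
      (q/2 * s ^ (q/2 - 1) + (-(q/2)) * s ^ (-(q/2) - 1)
        - (1 * q * (1 + s) ^ (q - 1) * s ^ (-(q/2))
           + (1 + s) ^ q * ((-(q/2)) * s ^ (-(q/2) - 1)))) ≤ 0 := by
    intro s hs hs1
    have h1s : (0:ℝ) < 1 + s := by linarith
    have r1 : s ^ (q/2 - 1) = s ^ q * s ^ (-(q/2) - 1) := by
      rw [← Real.rpow_add hs]; congr 1; ring
    have r2 : s ^ (-(q/2)) = s * s ^ (-(q/2) - 1) := by
      nth_rewrite 2 [← Real.rpow_one s]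
      rw [← Real.rpow_add hs]; congr 1; ring
    have r3 : (1 + s) ^ q = (1 + s) ^ (q - 1) * (1 + s) := by
      have h := Real.rpow_add h1s (q - 1) 1
      rw [Real.rpow_one] at h
      rw [show q - 1 + 1 = q by ring] at h
      exact h
    have hA := claimA hq1.le hq2.le hs.le hs1
    have e : (q/2 * s ^ (q/2 - 1) + (-(q/2)) * s ^ (-(q/2) - 1)
        - (1 * q * (1 + s) ^ (q - 1) * s ^ (-(q/2))
           + (1 + s) ^ q * ((-(q/2)) * s ^ (-(q/2) - 1))))
        = (q/2) * s ^ (-(q/2) - 1) * (s ^ q - 1 + (1 + s) ^ (q - 1) * (1 - s)) := by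
      rw [r1, r2, r3]; ring
    rw [e]
    have hpos : (0:ℝ) ≤ q/2 * s ^ (-(q/2) - 1) := by positivity
    exact mul_nonpos_of_nonneg_of_nonpos hpos hA
  rcases eq_or_lt_of_le ht1 with h1 | h1
  · rw [show t = 1 from h1]
    rw [hφ1.symm]
  · have hanti : AntitoneOn φ (Set.Icc t 1) := by
      apply antitoneOn_of_deriv_nonpos (convex_Icc t 1)
      · intro s hs
        exact ((hD s (lt_of_lt_of_le ht hs.1)).continuousAt).continuousWithinAt
      · intro s hs
        rw [interior_Icc] at hs
        exact ((hD s (lt_trans ht hs.1)).differentiableAt).differentiableWithinAt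
      · intro s hs
        rw [interior_Icc] at hs
        rw [(hD s (lt_trans ht hs.1)).deriv]
        exact hEneg s (lt_trans ht hs.1) hs.2.le
    have := hanti (Set.mem_Icc.2 ⟨le_refl t, ht1⟩) (Set.mem_Icc.2 ⟨ht1, le_refl 1⟩) ht1
    rw [hφ1] at this
    exact this


private lemma f_nonneg {q : ℝ} (hq1 : 1 < q) (hq2 : q < 2) (h2q : (2:ℝ) ^ q = 3)
    {t : ℝ} (ht : 0 < t) (ht1 : t ≤ 1) :
    (1 + t) ^ q ≤ 1 + t ^ q + t ^ (q/2) := by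
  have hphi := phi_nonneg hq1 hq2 h2q ht ht1
  have e1 : t ^ (q/2) * t ^ (q/2) = t ^ q := by
    rw [← Real.rpow_add ht]; congr 1; ring
  have e2 : t ^ (q/2) * t ^ (-(q/2)) = 1 := by
    rw [← Real.rpow_add ht]; norm_num
  have h := mul_nonneg (Real.rpow_nonneg ht.le (q/2)) hphi
  have e3 : t ^ (q/2) * (t ^ (q/2) + t ^ (-(q/2)) + 1 - (1 + t) ^ q * t ^ (-(q/2)))
      = t ^ q + 1 + t ^ (q/2) - (1 + t) ^ q := by
    have : t ^ (q/2) * ((1 + t) ^ q * t ^ (-(q/2))) = (1 + t) ^ q := by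
      rw [show t ^ (q/2) * ((1 + t) ^ q * t ^ (-(q/2)))
          = (1 + t) ^ q * (t ^ (q/2) * t ^ (-(q/2))) by ring, e2, mul_one]
    rw [mul_sub, mul_add, mul_add, e1, e2, mul_one, this]
  rw [e3] at h
  linarith

-- star with symmetry hypothesis
private lemma star_aux {q : ℝ} (hq1 : 1 < q) (hq2 : q < 2) (h2q : (2:ℝ) ^ q = 3)
    {C D : ℝ} (hD : 0 ≤ D) (hDC : D ≤ C) :
    (C + D) ^ q ≤ C ^ q + D ^ q + (C * D) ^ (q/2) := by
  rcases eq_or_lt_of_le hD with h0 | h0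
  · rw [← h0]
    rw [add_zero, mul_zero, Real.zero_rpow (by linarith : q ≠ 0),
      Real.zero_rpow (by positivity : q/2 ≠ 0)]
    linarith
  · have hC : 0 < C := lt_of_lt_of_le h0 hDC
    have ht : 0 < D / C := div_pos h0 hC
    have ht1 : D / C ≤ 1 := (div_le_one hC).2 hDC
    have hf := f_nonneg hq1 hq2 h2q ht ht1
    have hCq : (0:ℝ) < C ^ q := Real.rpow_pos_of_pos hC q
    have hmul := mul_le_mul_of_nonneg_left hf hCq.le
    -- rewrite each piece
    have i1 : C ^ q * (1 + D / C) ^ q = (C + D) ^ q := by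
      rw [← Real.mul_rpow hC.le (by positivity)]
      congr 1; field_simp
    have i2 : C ^ q * (D / C) ^ q = D ^ q := by
      rw [← Real.mul_rpow hC.le (by positivity)]
      congr 1; field_simp
    have i3 : C ^ q * (D / C) ^ (q/2) = (C * D) ^ (q/2) := by
      have : C ^ q = C ^ (q/2) * C ^ (q/2) := by
        rw [← Real.rpow_add hC]; congr 1; ring
      rw [this, mul_assoc, ← Real.mul_rpow hC.le (by positivity),
        ← Real.mul_rpow (by positivity) (by positivity)]
      congr 1; field_simp
    rw [mul_add, mul_add, mul_one, i1, i2, i3] at hmul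
    linarith

private lemma star {q : ℝ} (hq1 : 1 < q) (hq2 : q < 2) (h2q : (2:ℝ) ^ q = 3)
    {C D : ℝ} (hC : 0 ≤ C) (hD : 0 ≤ D) :
    (C + D) ^ q ≤ C ^ q + D ^ q + (C * D) ^ (q/2) := by
  rcases le_total D C with h | h
  · exact star_aux hq1 hq2 h2q hD h
  · have := star_aux hq1 hq2 h2q hC h
    rw [add_comm D C, mul_comm D C] at this
    linarith [this]


private lemma key (p : ℝ) (hp : p = Real.logb 4 3) (a b c d : ℝ)
    (ha : 0 ≤ a) (hb : 0 ≤ b) (hc : 0 ≤ c) (hd : 0 ≤ d) (h : b * d ≤ a * c) :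
    ((a + b) * (c + d)) ^ p ≤ (a * d) ^ p + (b * c) ^ p + (a * c) ^ p := by
  have hlog2 : (0:ℝ) < Real.log 2 := Real.log_pos (by norm_num)
  have hhalf : Real.logb 4 2 = 1/2 := by
    rw [Real.logb, show (4:ℝ) = 2^(2:ℕ) by norm_num, Real.log_pow]
    field_simp
    ring
  have hp0 : (1:ℝ)/2 < p := by
    rw [hp, ← hhalf]
    exact Real.logb_lt_logb (by norm_num) (by norm_num) (by norm_num)
  have hp1 : p < 1 := by
    have h44 : Real.logb 4 4 = 1 := Real.logb_self_eq_one (by norm_num)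
    rw [hp, ← h44]
    exact Real.logb_lt_logb (by norm_num) (by norm_num) (by norm_num)
  have hppos : 0 < p := by linarith
  have h4p : (4:ℝ) ^ p = 3 := by
    rw [hp]; exact Real.rpow_logb (by norm_num) (by norm_num) (by norm_num)
  have h2q : (2:ℝ) ^ (2*p) = 3 := by
    rw [Real.rpow_mul (by norm_num) 2 p]
    rw [show ((2:ℝ) ^ (2:ℝ)) = 4 by
      rw [show (2:ℝ) = ((2:ℕ):ℝ) by norm_num, Real.rpow_natCast]; norm_num]
    exact h4p
  have hq1 : 1 < 2*p := by linarith
  have hq2 : 2*p < 2 := by linarith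
  have hstar : ∀ C D : ℝ, 0 ≤ C → 0 ≤ D →
      (C + D) ^ (2*p) ≤ C ^ (2*p) + D ^ (2*p) + (C * D) ^ p := by
    intro C D hC hD
    have := star hq1 hq2 h2q hC hD
    rwa [show (2*p)/2 = p by ring] at this
  have hsq : ∀ X : ℝ, 0 ≤ X → X ^ (2*p) = (X ^ p)^2 := by
    intro X hX
    rw [show 2*p = p + p by ring, Real.rpow_add' hX (by positivity), sq]
  -- subadditivity
  have hsub : ∀ C D : ℝ, 0 ≤ C → 0 ≤ D → (C + D) ^ p ≤ C ^ p + D ^ p := by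
    intro C D hC hD
    have h1 := hstar C D hC hD
    rw [hsq _ (by positivity), hsq _ hC, hsq _ hD, Real.mul_rpow hC hD] at h1
    have h2 : ((C + D) ^ p)^2 ≤ (C ^ p + D ^ p)^2 := by
      nlinarith [Real.rpow_nonneg hC p, Real.rpow_nonneg hD p]
    exact le_of_pow_le_pow_left₀ (by norm_num) (by positivity) h2
  rcases eq_or_lt_of_le (mul_nonneg ha hc) with hz0 | hz0
  · -- degenerate case: a*c = 0, hence b*d = 0
    have hbd : b * d = 0 := le_antisymm (by rw [← hz0] at h; exact h) (mul_nonneg hb hd)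
    have e : (a + b) * (c + d) = a * d + b * c := by
      linear_combination -hz0 + hbd
    rw [e]
    have := hsub (a*d) (b*c) (mul_nonneg ha hd) (mul_nonneg hb hc)
    have hZ : 0 ≤ (a*c) ^ p := Real.rpow_nonneg (mul_nonneg ha hc) p
    linarith
  · -- main case: z = a*c > 0
    set x := a*d with hx
    set y := b*c with hy
    set z := a*c with hz
    set w := b*d with hw
    have hxn : 0 ≤ x := mul_nonneg ha hd
    have hyn : 0 ≤ y := mul_nonneg hb hc
    have hwn : 0 ≤ w := mul_nonneg hb hd
    set U := x ^ p with hU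
    set V := y ^ p with hV
    set Z := z ^ p with hZ
    set W := w ^ p with hW
    have hUn : 0 ≤ U := Real.rpow_nonneg hxn p
    have hVn : 0 ≤ V := Real.rpow_nonneg hyn p
    have hZp : 0 < Z := Real.rpow_pos_of_pos hz0 p
    have hWn : 0 ≤ W := Real.rpow_nonneg hwn p
    have hWZ : W ≤ Z := Real.rpow_le_rpow hwn h hppos.le
    have hUV : U * V = Z * W := by
      rw [hU, hV, hZ, hW, ← Real.mul_rpow hxn hyn, ← Real.mul_rpow (mul_nonneg ha hc) hwn]
      congr 1
      rw [hw]; ring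
    -- star applied twice
    have h1 : (z + x) ^ (2*p) ≤ Z^2 + U^2 + Z*U := by
      have := hstar z x hz0.le hxn
      rwa [hsq _ hz0.le, hsq _ hxn, Real.mul_rpow hz0.le hxn] at this
    have h2 : (z + y) ^ (2*p) ≤ Z^2 + V^2 + Z*V := by
      have := hstar z y hz0.le hyn
      rwa [hsq _ hz0.le, hsq _ hyn, Real.mul_rpow hz0.le hyn] at this
    -- polynomial step
    have hpoly : (Z^2 + U^2 + Z*U) * (Z^2 + V^2 + Z*V) ≤ (Z * (U + V + Z))^2 := by
      have idd : (Z * (U + V + Z))^2 - (Z^2 + U^2 + Z*U) * (Z^2 + V^2 + Z*V)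
          = (Z^2 - U*V) * (U*Z + V*Z + U*V) := by ring
      have hfac : 0 ≤ (Z^2 - U*V) * (U*Z + V*Z + U*V) := by
        apply mul_nonneg
        · rw [hUV]
          have h9 := mul_nonneg hZp.le (sub_nonneg.2 hWZ)
          nlinarith [h9]
        · have := add_nonneg (add_nonneg (mul_nonneg hUn hZp.le) (mul_nonneg hVn hZp.le))
            (mul_nonneg hUn hVn)
          exact this
      linarith [idd, hfac]
    -- combine
    set S := x + y + z + w with hS
    have hSn : 0 ≤ S := by
      have := add_nonneg (add_nonneg (add_nonneg hxn hyn) hz0.le) hwn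
      exact this
    have hfact : z * S = (z + x) * (z + y) := by
      rw [hS, hx, hy, hz, hw]; ring
    have hchain : ((z*S) ^ p)^2 ≤ (Z * (U + V + Z))^2 := by
      calc ((z*S) ^ p)^2 = (z*S) ^ (2*p) := (hsq _ (mul_nonneg hz0.le hSn)).symm
        _ = ((z+x)*(z+y)) ^ (2*p) := by rw [hfact]
        _ = (z+x) ^ (2*p) * (z+y) ^ (2*p) := by
            rw [Real.mul_rpow (by linarith : (0:ℝ) ≤ z+x) (by linarith : (0:ℝ) ≤ z+y)]
        _ ≤ (Z^2 + U^2 + Z*U) * (Z^2 + V^2 + Z*V) := by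
            apply mul_le_mul h1 h2 (Real.rpow_nonneg (by linarith) _)
              (add_nonneg (add_nonneg (sq_nonneg Z) (sq_nonneg U)) (mul_nonneg hZp.le hUn))
        _ ≤ (Z * (U + V + Z))^2 := hpoly
    have hroot : (z*S) ^ p ≤ Z * (U + V + Z) :=
      le_of_pow_le_pow_left₀ (by norm_num)
        (mul_nonneg hZp.le (add_nonneg (add_nonneg hUn hVn) hZp.le)) hchain
    rw [Real.mul_rpow hz0.le hSn] at hroot
    have hfin : S ^ p ≤ U + V + Z := by
      rw [← hZ] at hroot
      exact (mul_le_mul_iff_right₀ hZp).1 hroot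
    have egoal : (a + b) * (c + d) = S := by
      rw [hS, hx, hy, hz, hw]; ring
    rw [egoal]
    exact hfin


theorem stmt_9 (p : ℝ) (hp : p = Real.logb 4 3) (a b c d : ℝ)
    (ha : 0 ≤ a) (hb : 0 ≤ b) (hc : 0 ≤ c) (hd : 0 ≤ d) :
    (a * d) ^ p + (b * c) ^ p + max ((a * c) ^ p) ((b * d) ^ p) ≥
      ((a + b) * (c + d)) ^ p := by
  have hp0 : 0 < p := by
    rw [hp]; exact Real.logb_pos (by norm_num) (by norm_num)
  rcases le_total (b * d) (a * c) with h | h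
  · have hmax : max ((a * c) ^ p) ((b * d) ^ p) = (a * c) ^ p :=
      max_eq_left (Real.rpow_le_rpow (mul_nonneg hb hd) h hp0.le)
    rw [hmax]
    exact key p hp a b c d ha hb hc hd h
  · have hmax : max ((a * c) ^ p) ((b * d) ^ p) = (b * d) ^ p :=
      max_eq_right (Real.rpow_le_rpow (mul_nonneg ha hc) h hp0.le)
    rw [hmax]
    have hk := key p hp b a d c hb ha hd hc h
    have e : (b + a) * (d + c) = (a + b) * (c + d) := by ring
    rw [e] at hk
    linarith
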